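/- Every fixed point x* ∈ Δ_n of F satisfies: (b) x*_i ≥ 1/n for every fully stubborn i (θ_i = 0), with equality x*_i = 1/n if and only if C_ji = 0 for every partially stubborn j (θ_j > 0); (c) x*_i > (1 − θ_i)/n for every partially stubborn i (θ_i > 0), and moreover x*_i < 1/n whenever C_ji = 0 for every partially stubborn j; (d) max_i x*_i < 1/n + θ_ave, where θ_ave = (1/n)Σ_j θ_j. -/

import Mathlib

open Matrix

/-- `W(x) = diag(x) + (I - diag(x)) C` -/
noncomputable def Wmat {n : ℕ} (C : Matrix (Fin n) (Fin n) ℝ) (x : Fin n → ℝ) :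
    Matrix (Fin n) (Fin n) ℝ :=
  Matrix.diagonal x + (1 - Matrix.diagonal x) * C

/-- `F(x) = (I - Θ)(I - W(x)ᵀΘ)⁻¹ (1/n) 1_n` -/
noncomputable def Fmap {n : ℕ} (C : Matrix (Fin n) (Fin n) ℝ) (θ : Fin n → ℝ)
    (x : Fin n → ℝ) : Fin n → ℝ :=
  ((1 - Matrix.diagonal θ) * (1 - (Wmat C x)ᵀ * Matrix.diagonal θ)⁻¹).mulVec
    (fun _ => 1 / (n : ℝ))

/-- The simplex `Δ_n`. -/
def simplex (n : ℕ) : Set (Fin n → ℝ) := {x | (∀ i, 0 ≤ x i) ∧ ∑ i, x i = 1}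

theorem stmt5 (n : ℕ) (hn : 2 ≤ n) (C : Matrix (Fin n) (Fin n) ℝ)
    (hCnonneg : ∀ i j, 0 ≤ C i j) (hCrow : ∀ i, ∑ j, C i j = 1)
    (hCdiag : ∀ i, C i i = 0)
    (θ : Fin n → ℝ) (hθ0 : ∀ i, 0 ≤ θ i) (hθ1 : ∀ i, θ i < 1) (hθex : ∃ j, 0 < θ j)
    (xstar : Fin n → ℝ) (hmem : xstar ∈ simplex n) (hfix : Fmap C θ xstar = xstar) :
    (∀ i, θ i = 0 →
      1 / n ≤ xstar i ∧ (xstar i = 1 / n ↔ ∀ j, 0 < θ j → C j i = 0)) ∧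
    (∀ i, 0 < θ i →
      (1 - θ i) / n < xstar i ∧ ((∀ j, 0 < θ j → C j i = 0) → xstar i < 1 / n)) ∧
    (∀ i, xstar i < 1 / n + (∑ j, θ j) / n) := by
  obtain ⟨hx0, hxsum⟩ := hmem
  have hnpos : (0:ℝ) < n := by
    have : (0:ℕ) < n := by omega
    exact_mod_cast this
  have hθ1' : ∀ i, 0 < 1 - θ i := fun i => by linarith [hθ1 i]
  have hxle1 : ∀ i, xstar i ≤ 1 := by
    intro i
    calc xstar i ≤ ∑ j, xstar j :=
          Finset.single_le_sum (fun j _ => hx0 j) (Finset.mem_univ i)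
      _ = 1 := hxsum
  set W := Wmat C xstar with hWdef
  have hWe : ∀ i j, W i j = (if i = j then xstar i else 0) + (1 - xstar i) * C i j := by
    intro i j
    simp [hWdef, Wmat, Matrix.add_apply, Matrix.sub_apply, Matrix.diagonal_apply,
      Matrix.sub_mul, Matrix.one_mul, Matrix.diagonal_mul]
    ring
  have hWdiag : ∀ i, W i i = xstar i := by
    intro i; rw [hWe]; simp [hCdiag i]
  have hWoff : ∀ i j, i ≠ j → W i j = (1 - xstar i) * C i j := by
    intro i j h; rw [hWe]; simp [h]
  have hWnn : ∀ i j, 0 ≤ W i j := by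
    intro i j
    rw [hWe]
    have h1 : 0 ≤ (1 - xstar i) * C i j :=
      mul_nonneg (sub_nonneg.mpr (hxle1 i)) (hCnonneg i j)
    split
    · linarith [hx0 i]
    · linarith
  have hWrow : ∀ i, ∑ j, W i j = 1 := by
    intro i
    have : ∑ j, W i j = ∑ j, ((if i = j then xstar i else 0) + (1 - xstar i) * C i j) :=
      Finset.sum_congr rfl fun j _ => hWe i j
    rw [this, Finset.sum_add_distrib, Finset.sum_ite_eq Finset.univ i (fun _ => xstar i),
      ← Finset.mul_sum, hCrow i]
    simp
  set B := (1 : Matrix (Fin n) (Fin n) ℝ) - Wᵀ * Matrix.diagonal θ with hBdef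
  have hBe : ∀ i j, B i j = (if i = j then 1 else 0) - W j i * θ j := by
    intro i j
    simp [hBdef, Matrix.sub_apply, Matrix.one_apply, Matrix.mul_diagonal,
      Matrix.transpose_apply]
  have hdet : B.det ≠ 0 := by
    apply det_ne_zero_of_sum_col_lt_diag
    intro k
    have hBkk : B k k = 1 - xstar k * θ k := by rw [hBe]; simp [hWdiag]
    have hBik : ∀ i, i ≠ k → B i k = -(W k i * θ k) := by
      intro i h; rw [hBe]; simp [h]
    have hsum : ∑ i ∈ Finset.univ.erase k, ‖B i k‖ = θ k * (1 - xstar k) := by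
      have : ∀ i ∈ Finset.univ.erase k, ‖B i k‖ = W k i * θ k := by
        intro i hi
        rw [hBik i (Finset.ne_of_mem_erase hi), norm_neg, Real.norm_eq_abs,
          abs_of_nonneg (mul_nonneg (hWnn k i) (hθ0 k))]
      rw [Finset.sum_congr rfl this, ← Finset.sum_mul]
      have : ∑ i ∈ Finset.univ.erase k, W k i = 1 - xstar k := by
        have h := Finset.add_sum_erase Finset.univ (fun i => W k i) (Finset.mem_univ k)
        rw [hWrow k] at h
        change W k k + ∑ i ∈ Finset.univ.erase k, W k i = 1 at h
        rw [hWdiag k] at h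
        linarith
      rw [this]; ring
    rw [hsum, hBkk, Real.norm_eq_abs]
    have h1 : 0 < 1 - xstar k * θ k := by
      nlinarith [hθ1 k, hθ0 k, hx0 k, hxle1 k]
    rw [abs_of_pos h1]
    nlinarith [hθ1 k, hθ0 k, hx0 k, hxle1 k]
  have hBunit : IsUnit B.det := isUnit_iff_ne_zero.mpr hdet
  set c : Fin n → ℝ := fun _ => 1 / (n : ℝ) with hcdef
  set y := B⁻¹.mulVec c with hydef
  have hxy : xstar = (1 - Matrix.diagonal θ).mulVec y := by
    conv_lhs => rw [← hfix]
    rw [Fmap, ← hWdef, ← hBdef, ← Matrix.mulVec_mulVec]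
  have hE1 : ∀ i, xstar i = (1 - θ i) * y i := by
    intro i
    rw [hxy, Matrix.sub_mulVec, Matrix.one_mulVec, Pi.sub_apply, Matrix.mulVec_diagonal]
    ring
  have hBy : B.mulVec y = c := by
    rw [hydef, Matrix.mulVec_mulVec, Matrix.mul_nonsing_inv B hBunit, Matrix.one_mulVec]
  set t : Fin n → ℝ := fun i => ∑ j, W j i * (θ j * y j) with htdef
  have hE2 : ∀ i, y i = 1 / n + t i := by
    intro i
    have h := congrFun hBy i
    rw [Matrix.mulVec, dotProduct] at h
    have h2 : ∑ j, B i j * y j = y i - t i := by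
      have : ∀ j, B i j * y j = (if i = j then y j else 0) - W j i * (θ j * y j) := by
        intro j; rw [hBe]; split <;> ring
      rw [Finset.sum_congr rfl fun j _ => this j, Finset.sum_sub_distrib,
        Finset.sum_ite_eq Finset.univ i (fun j => y j), htdef]
      simp
    rw [h2] at h
    have : c i = 1 / n := rfl
    rw [this] at h
    linarith
  -- basic positivity
  have hy0 : ∀ i, 0 ≤ y i := by
    intro i
    have h1 := hE1 i
    nlinarith [hx0 i, hθ1' i]
  have ht0 : ∀ i, 0 ≤ t i :=
    fun i => Finset.sum_nonneg fun j _ =>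
      mul_nonneg (hWnn j i) (mul_nonneg (hθ0 j) (hy0 j))
  have hyge : ∀ i, 1 / n ≤ y i := fun i => by rw [hE2 i]; linarith [ht0 i]
  have hypos : ∀ i, 0 < y i := fun i => lt_of_lt_of_le (by positivity) (hyge i)
  have hxpos : ∀ i, 0 < xstar i := by
    intro i; rw [hE1 i]; exact mul_pos (hθ1' i) (hypos i)
  have hxlt1 : ∀ i, xstar i < 1 := by
    intro i
    haveI : Nontrivial (Fin n) := ⟨⟨⟨0, by omega⟩, ⟨1, by omega⟩, by simp [Fin.ext_iff]⟩⟩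
    obtain ⟨k, hk⟩ := exists_ne (α := Fin n) i
    have hsub : ({i, k} : Finset (Fin n)) ⊆ Finset.univ := Finset.subset_univ _
    have hpair : ∑ j ∈ ({i, k} : Finset (Fin n)), xstar j = xstar i + xstar k :=
      Finset.sum_pair (Ne.symm hk)
    have := Finset.sum_le_sum_of_subset_of_nonneg hsub (fun j _ _ => hx0 j)
    rw [hpair, hxsum] at this
    linarith [hxpos k]
  have hxeq : ∀ i, xstar i = (1 - θ i) / n + (1 - θ i) * t i := by
    intro i; rw [hE1 i, hE2 i]; ring
  have htsum : ∑ i, (1 - θ i) * t i = (∑ j, θ j) / n := by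
    have h1 : ∑ i, xstar i = ∑ i, ((1 - θ i) / n + (1 - θ i) * t i) :=
      Finset.sum_congr rfl fun i _ => hxeq i
    rw [hxsum, Finset.sum_add_distrib] at h1
    have h2 : ∑ i, (1 - θ i) / n = 1 - (∑ i, θ i) / n := by
      rw [← Finset.sum_div, Finset.sum_sub_distrib, Finset.sum_const, Finset.card_univ,
        Fintype.card_fin]
      field_simp
      rw [nsmul_eq_mul, mul_one]
    rw [h2] at h1
    linarith
  have htpos : ∀ j, 0 < θ j → 0 < t j := by
    intro j hj
    have h1 : W j j * (θ j * y j) ≤ t j :=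
      Finset.single_le_sum (f := fun k => W k j * (θ k * y k))
        (fun k _ => mul_nonneg (hWnn k j) (mul_nonneg (hθ0 k) (hy0 k)))
        (Finset.mem_univ j)
    have : 0 < W j j * (θ j * y j) := by
      rw [hWdiag]
      exact mul_pos (hxpos j) (mul_pos hj (hypos j))
    linarith
  refine ⟨?_, ?_, ?_⟩
  · -- (b)
    intro i hi
    have hxi : xstar i = 1 / n + t i := by rw [hxeq i, hi]; ring
    constructor
    · linarith [ht0 i]
    constructor
    · intro heq j hj
      have hti : t i = 0 := by linarith [hxi ▸ heq]
      have hall : ∀ k ∈ Finset.univ, W k i * (θ k * y k) = 0 := by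
        rw [← Finset.sum_eq_zero_iff_of_nonneg
          (fun k _ => mul_nonneg (hWnn k i) (mul_nonneg (hθ0 k) (hy0 k)))]
        exact hti
      have hji : j ≠ i := by rintro rfl; rw [hi] at hj; exact lt_irrefl 0 hj
      have h0 := hall j (Finset.mem_univ j)
      rw [hWoff j i hji] at h0
      have hθy : 0 < θ j * y j := mul_pos hj (hypos j)
      have h1xj : 0 < 1 - xstar j := by linarith [hxlt1 j]
      have : (1 - xstar j) * C j i = 0 := by
        rcases mul_eq_zero.mp h0 with h | h
        · exact h
        · exact absurd h (ne_of_gt hθy)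
      rcases mul_eq_zero.mp this with h | h
      · exact absurd h h1xj.ne'
      · exact h
    · intro hC
      have hti : t i = 0 := by
        apply Finset.sum_eq_zero
        intro j _
        rcases (hθ0 j).lt_or_eq with hj | hj
        · have hji : j ≠ i := by rintro rfl; rw [hi] at hj; exact lt_irrefl 0 hj
          rw [hWoff j i hji, hC j hj]
          ring
        · rw [← hj]; ring
      rw [hxi, hti]; ring
  · -- (c)
    intro i hi
    have hti : 0 < t i := htpos i hi
    constructor
    · rw [hxeq i]
      have : 0 < (1 - θ i) * t i := mul_pos (hθ1' i) hti
      linarith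
    · intro hC
      have htieq : t i = xstar i * (θ i * y i) := by
        show (∑ j, W j i * (θ j * y j)) = xstar i * (θ i * y i)
        have hs : (∑ j, W j i * (θ j * y j)) = W i i * (θ i * y i) := by
          apply Finset.sum_eq_single_of_mem i (Finset.mem_univ i)
          intro j _ hji
          rcases (hθ0 j).lt_or_eq with hj | hj
          · rw [hWoff j i hji, hC j hj]; ring
          · rw [← hj]; ring
        rw [hs, hWdiag]
      have hyi : (1 - θ i) * y i = xstar i := (hE1 i).symm
      have hxeq2 : xstar i = (1 - θ i) / n + θ i * xstar i ^ 2 := by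
        have h := hxeq i
        rw [htieq] at h
        have key : (1 - θ i) * (xstar i * (θ i * y i)) = θ i * xstar i ^ 2 := by
          calc (1 - θ i) * (xstar i * (θ i * y i))
              = θ i * xstar i * ((1 - θ i) * y i) := by ring
            _ = θ i * xstar i * xstar i := by rw [hyi]
            _ = θ i * xstar i ^ 2 := by ring
        linarith
      by_contra hge
      push_neg at hge
      have hx1 : xstar i < 1 := hxlt1 i
      have hθx : θ i * xstar i < θ i := by nlinarith
      have h2 : 0 < 1 - θ i * xstar i := by nlinarith [hθ1 i, hθ0 i, hx0 i]
      have h3 : 1 / (n:ℝ) * (1 - θ i * xstar i) ≤ xstar i * (1 - θ i * xstar i) :=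
        mul_le_mul_of_nonneg_right hge h2.le
      have h4 : xstar i * (1 - θ i * xstar i) = xstar i - θ i * xstar i ^ 2 := by ring
      have hq : xstar i - θ i * xstar i ^ 2 = (1 - θ i) / n := by linarith
      have h5 : (1 - θ i * xstar i) / n ≤ (1 - θ i) / n := by
        calc (1 - θ i * xstar i) / n = 1 / (n:ℝ) * (1 - θ i * xstar i) := by ring
          _ ≤ xstar i * (1 - θ i * xstar i) := h3
          _ = (1 - θ i) / n := by linarith
      have h6 := (div_le_div_iff₀ hnpos hnpos).mp h5
      nlinarith [h6, hnpos, hθx]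
  · -- (d)
    intro i
    obtain ⟨j, hj⟩ := hθex
    have hle : (1 - θ i) * t i ≤ (∑ k, θ k) / n := by
      rw [← htsum]
      exact Finset.single_le_sum
        (fun k _ => mul_nonneg (le_of_lt (hθ1' k)) (ht0 k)) (Finset.mem_univ i)
    rcases (hθ0 i).lt_or_eq with hi | hi
    · have hlt : (1 - θ i) / n < 1 / n := by
        rw [div_lt_div_iff₀ hnpos hnpos]; nlinarith
      rw [hxeq i]
      linarith
    · -- θ i = 0
      have hji : j ≠ i := by rintro rfl; rw [← hi] at hj; exact lt_irrefl 0 hj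
      have hpair : (1 - θ i) * t i + (1 - θ j) * t j ≤ ∑ k, (1 - θ k) * t k := by
        have hsub : ({i, j} : Finset (Fin n)) ⊆ Finset.univ := Finset.subset_univ _
        have hp : ∑ k ∈ ({i, j} : Finset (Fin n)), (1 - θ k) * t k
            = (1 - θ i) * t i + (1 - θ j) * t j := Finset.sum_pair (Ne.symm hji)
        have := Finset.sum_le_sum_of_subset_of_nonneg hsub
          (fun k _ _ => mul_nonneg (le_of_lt (hθ1' k)) (ht0 k))
        rw [hp] at this
        exact this
      have hjpos : 0 < (1 - θ j) * t j := mul_pos (hθ1' j) (htpos j hj)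
      rw [htsum] at hpair
      rw [hxeq i, ← hi]
      have : t i < (∑ k, θ k) / n := by
        have h0 : (1 - (0:ℝ)) * t i = t i := by ring
        rw [← hi] at hpair
        rw [h0] at hpair
        linarith
      simp only [sub_zero, one_mul]
      linarith
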